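/- Assume K = k_i + k_j ≠ 4 and that it is not the case that both K = 2 and k_l = 0. Then every z ∈ V with E(z) ∈ B and F(z) ∈ B lies in B. In other words, the 𝔰-invariant part of H¹(ℂℙ¹, T₂^{ij}) is zero. -/

import Mathlib

noncomputable section

open LaurentPolynomial

/-- `L = ℂ[x, x⁻¹]`, the Laurent polynomials over `ℂ`. -/
abbrev L : Type := LaurentPolynomial ℂ

/-- The coefficient of `x^n` in a Laurent polynomial. -/
def coeffL (p : L) (n : ℤ) : ℂ := (AddMonoidAlgebra.coeff p : ℤ →₀ ℂ) n

lemma coeffL_zero (n : ℤ) : coeffL 0 n = 0 := rfl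

lemma coeffL_add (a b : L) (n : ℤ) : coeffL (a + b) n = coeffL a n + coeffL b n := by
  unfold coeffL; erw [Finsupp.add_apply]; rfl

lemma coeffL_smul (c : ℂ) (a : L) (n : ℤ) : coeffL (c • a) n = c * coeffL a n := by
  unfold coeffL; erw [Finsupp.smul_apply]; rfl

/-- `L₊`: Laurent polynomials involving only nonnegative powers of `x`. -/
def Lplus : Submodule ℂ L where
  carrier := {p | ∀ n : ℤ, n < 0 → coeffL p n = 0}
  zero_mem' := fun n _ => coeffL_zero n
  add_mem' := by intro a b ha hb n hn; rw [coeffL_add, ha n hn, hb n hn, add_zero]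
  smul_mem' := by intro c p hp n hn; rw [coeffL_smul, hp n hn, mul_zero]

/-- `L₋`: Laurent polynomials involving only nonpositive powers of `x`. -/
def Lminus : Submodule ℂ L where
  carrier := {p | ∀ n : ℤ, 0 < n → coeffL p n = 0}
  zero_mem' := fun n _ => coeffL_zero n
  add_mem' := by intro a b ha hb n hn; rw [coeffL_add, ha n hn, hb n hn, add_zero]
  smul_mem' := by intro c p hp n hn; rw [coeffL_smul, hp n hn, mul_zero]

/-- The derivative `d/dx` on Laurent polynomials. -/
def D (p : L) : L := Finsupp.sum (AddMonoidAlgebra.coeff p : ℤ →₀ ℂ) fun n a => ((n : ℂ) * a) • T (n - 1)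

/-- `V = L × L`, the model of Čech 1-cochains with values in `T₂^{ij}`:
a pair `(a, b)` encodes `a(x)ξᵢξⱼ∂/∂x + b(x)ξᵢξⱼξₗ∂/∂ξₗ` on `U₀ ∩ U₁`. -/
abbrev V : Type := L × L

/-- `B₀ = L₊ × L₊`: cochains holomorphic in `U₀`. -/
def B0 : Submodule ℂ V := Lplus.prod Lplus

/-- `B₁`: cochains holomorphic in `U₁`, i.e. pairs `(a, b)` with
`x^(K-2)·a ∈ L₋` and `x^K·(b - kl·x⁻¹·a) ∈ L₋`. -/
def B1 (K kl : ℤ) : Submodule ℂ V :=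
  Lminus.comap ((LinearMap.mulLeft ℂ (T (K - 2))).comp (LinearMap.fst ℂ L L)) ⊓
  Lminus.comap ((LinearMap.mulLeft ℂ (T K)).comp
    (LinearMap.snd ℂ L L - (kl : ℂ) • (LinearMap.mulLeft ℂ (T (-1))).comp (LinearMap.fst ℂ L L)))

/-- The coboundary subspace `B = B₀ + B₁`. -/
def B (K kl : ℤ) : Submodule ℂ V := B0 ⊔ B1 K kl

/-- Action of `e = ∂/∂x` on cocycles: `E(a, b) = (a′, b′)`. -/
def Eop : V → V := fun p => (D p.1, D p.2)

/-- Action of `f = ∂/∂y` on cocycles: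
`F(a, b) = ((2−K)·x·a − x²·a′, kl·a − K·x·b − x²·b′)`. -/
def Fop (K kl : ℤ) : V → V := fun p =>
  (((2 - K : ℤ) : ℂ) • (T 1 * p.1) - T 2 * D p.1,
   (kl : ℂ) • p.1 - (K : ℂ) • (T 1 * p.2) - T 2 * D p.2)

lemma coeffL_T_mul (k : ℤ) (p : L) (m : ℤ) : coeffL (T k * p) m = coeffL p (m - k) := by
  unfold coeffL
  erw [AddMonoidAlgebra.coeff_single_mul_apply p (1:ℂ) k m]
  rw [one_mul]; ring_nf

lemma coeffL_sub (a b : L) (n : ℤ) : coeffL (a - b) n = coeffL a n - coeffL b n := by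
  unfold coeffL; erw [Finsupp.sub_apply]; rfl

lemma mem_Lminus_iff {p : L} : p ∈ Lminus ↔ ∀ n : ℤ, 0 < n → coeffL p n = 0 := Iff.rfl
lemma mem_Lplus_iff {p : L} : p ∈ Lplus ↔ ∀ n : ℤ, n < 0 → coeffL p n = 0 := Iff.rfl

lemma mem_B0_iff {z : V} : z ∈ B0 ↔ (∀ n : ℤ, n < 0 → coeffL z.1 n = 0) ∧
    (∀ n : ℤ, n < 0 → coeffL z.2 n = 0) := by
  rw [B0, Submodule.mem_prod]; exact Iff.rfl

lemma mem_B1_iff {K kl : ℤ} {z : V} :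
    z ∈ B1 K kl ↔ (∀ n : ℤ, 2 - K < n → coeffL z.1 n = 0) ∧
      (∀ m : ℤ, -K < m → coeffL z.2 m - (kl : ℂ) * coeffL z.1 (m + 1) = 0) := by
  rw [B1, Submodule.mem_inf, Submodule.mem_comap, Submodule.mem_comap]
  simp only [LinearMap.comp_apply, LinearMap.fst_apply, LinearMap.snd_apply,
    LinearMap.sub_apply, LinearMap.smul_apply, LinearMap.mulLeft_apply]
  rw [mem_Lminus_iff, mem_Lminus_iff]
  constructor
  · rintro ⟨h1, h2⟩
    refine ⟨fun n hn => ?_, fun m hm => ?_⟩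
    · have := h1 (n + (K - 2)) (by omega)
      rw [coeffL_T_mul] at this
      have e : n + (K - 2) - (K - 2) = n := by ring
      rwa [e] at this
    · have := h2 (m + K) (by omega)
      rw [coeffL_T_mul, coeffL_sub, coeffL_smul, coeffL_T_mul] at this
      have e : m + K - K = m := by ring
      rw [e] at this
      have e2 : m - -1 = m + 1 := by ring
      rwa [e2] at this
  · rintro ⟨h1, h2⟩
    refine ⟨fun n hn => ?_, fun m hm => ?_⟩
    · rw [coeffL_T_mul]; exact h1 _ (by omega)
    · rw [coeffL_T_mul, coeffL_sub, coeffL_smul, coeffL_T_mul]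
      have e : m - K - -1 = m - K + 1 := by ring
      rw [e]; exact h2 _ (by omega)

lemma coeffL_D (p : L) (m : ℤ) : coeffL (D p) m = ((m + 1 : ℤ) : ℂ) * coeffL p (m + 1) := by
  unfold coeffL D
  rw [Finsupp.sum]
  erw [AddMonoidAlgebra.coeff_sum, Finsupp.finset_sum_apply]
  have h : ∀ n ∈ (AddMonoidAlgebra.coeff p).support, AddMonoidAlgebra.coeff (((n : ℂ) * AddMonoidAlgebra.coeff p n) • T (n - 1) : L) m
      = if n = m + 1 then ((n : ℂ) * AddMonoidAlgebra.coeff p n) else 0 := by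
    intro n _
    rw [AddMonoidAlgebra.coeff_smul_apply]
    rw [T_apply]
    split_ifs with h1 h2 h2 <;> simp_all <;> omega
  rw [Finset.sum_congr rfl h, Finset.sum_ite_eq' (AddMonoidAlgebra.coeff p).support (m + 1)]
  split_ifs with hs
  · push_cast; ring
  · rw [Finsupp.notMem_support_iff.mp hs, mul_zero]

lemma coeffL_Eop1 (z : V) (n : ℤ) :
    coeffL (Eop z).1 n = ((n + 1 : ℤ) : ℂ) * coeffL z.1 (n + 1) := coeffL_D _ _
lemma coeffL_Eop2 (z : V) (n : ℤ) :
    coeffL (Eop z).2 n = ((n + 1 : ℤ) : ℂ) * coeffL z.2 (n + 1) := coeffL_D _ _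

lemma coeffL_Fop1 (K kl : ℤ) (z : V) (n : ℤ) :
    coeffL (Fop K kl z).1 n = ((3 - K - n : ℤ) : ℂ) * coeffL z.1 (n - 1) := by
  show coeffL (((2 - K : ℤ) : ℂ) • (T 1 * z.1) - T 2 * D z.1) n = _
  rw [coeffL_sub, coeffL_smul, coeffL_T_mul, coeffL_T_mul, coeffL_D]
  have e : n - 2 + 1 = n - 1 := by ring
  rw [e]; push_cast; ring

lemma coeffL_Fop2 (K kl : ℤ) (z : V) (m : ℤ) :
    coeffL (Fop K kl z).2 m
      = (kl : ℂ) * coeffL z.1 m - ((K + m - 1 : ℤ) : ℂ) * coeffL z.2 (m - 1) := by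
  show coeffL ((kl : ℂ) • z.1 - (K : ℂ) • (T 1 * z.2) - T 2 * D z.2) m = _
  rw [coeffL_sub, coeffL_sub, coeffL_smul, coeffL_smul, coeffL_T_mul, coeffL_T_mul, coeffL_D]
  have e : m - 2 + 1 = m - 1 := by ring
  rw [e]; push_cast; ring

/-- Linear functionals vanishing on `B`. -/
lemma forward {K kl : ℤ} {z : V} (hz : z ∈ B K kl) :
    (∀ n : ℤ, 2 - K < n → n < 0 → coeffL z.1 n = 0) ∧
    (∀ m : ℤ, 1 - K < m → m < 0 → coeffL z.2 m = 0) ∧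
    (∀ m : ℤ, -K < m → m ≤ -2 → coeffL z.2 m = (kl : ℂ) * coeffL z.1 (m + 1)) := by
  obtain ⟨z0, h0, z1, h1, rfl⟩ := Submodule.mem_sup.mp hz
  rw [mem_B0_iff] at h0
  rw [mem_B1_iff] at h1
  have f1 : (z0 + z1).1 = z0.1 + z1.1 := rfl
  have f2 : (z0 + z1).2 = z0.2 + z1.2 := rfl
  refine ⟨fun n h1n h2n => ?_, fun m h1m h2m => ?_, fun m h1m h2m => ?_⟩
  · rw [f1, coeffL_add, h0.1 n h2n, h1.1 n h1n, add_zero]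
  · have hz1 : coeffL z1.2 m = 0 := by
      have := h1.2 m (by omega)
      rw [h1.1 (m + 1) (by omega), mul_zero, sub_zero] at this
      exact this
    rw [f2, coeffL_add, h0.2 m h2m, hz1, add_zero]
  · have hb1 := h1.2 m (by omega)
    rw [f1, f2, coeffL_add, coeffL_add, h0.2 m (by omega), h0.1 (m + 1) (by omega),
      zero_add, zero_add]
    exact sub_eq_zero.mp hb1

/-- The strictly-negative-degree part of a Laurent polynomial. -/
def negA (p : L) : L := AddMonoidAlgebra.ofCoeff (Finsupp.filter (fun n => n < 0) (AddMonoidAlgebra.coeff p))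

lemma coeffL_negA (p : L) (n : ℤ) :
    coeffL (negA p) n = if n < 0 then coeffL p n else 0 := by
  unfold coeffL negA
  classical
  erw [Finsupp.filter_apply]

lemma coeffL_sub_negA (p : L) (n : ℤ) (hn : n < 0) : coeffL (p - negA p) n = 0 := by
  rw [coeffL_sub, coeffL_negA, if_pos hn, sub_self]

lemma decomp (K kl : ℤ) (z z1 : V) (h1 : z1 ∈ B1 K kl) (h0 : z - z1 ∈ B0) : z ∈ B K kl := by
  rw [B, Submodule.mem_sup]
  exact ⟨z - z1, h0, z1, h1, by abel⟩

lemma coeffL_T (k n : ℤ) : coeffL (T k : L) n = if k = n then 1 else 0 := by unfold coeffL; exact T_apply n k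

lemma backward_le1 {K kl : ℤ} (hK : K ≤ 1) (z : V) : z ∈ B K kl := by
  refine decomp K kl z (negA z.1, negA z.2) ?_ ?_
  · rw [mem_B1_iff]
    constructor
    · intro n hn
      rw [coeffL_negA, if_neg (by omega)]
    · intro m hm
      show coeffL (negA z.2) m - (kl : ℂ) * coeffL (negA z.1) (m + 1) = 0
      rw [coeffL_negA, coeffL_negA, if_neg (by omega), if_neg (by omega), mul_zero, sub_zero]
  · rw [mem_B0_iff]
    exact ⟨fun n hn => coeffL_sub_negA z.1 n hn, fun n hn => coeffL_sub_negA z.2 n hn⟩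

lemma backward2 {K kl : ℤ} (hK : K = 2) (hkl : kl ≠ 0) (z : V) : z ∈ B K kl := by
  set c : ℂ := coeffL z.2 (-1) / kl with hc
  refine decomp K kl z (negA z.1 + c • T 0, negA z.2) ?_ ?_
  · rw [mem_B1_iff]
    constructor
    · intro n hn
      show coeffL (negA z.1 + c • T 0) n = 0
      rw [coeffL_add, coeffL_smul, coeffL_negA, coeffL_T,
        if_neg (by omega), if_neg (by omega), mul_zero, add_zero]
    · intro m hm
      show coeffL (negA z.2) m - (kl : ℂ) * coeffL (negA z.1 + c • T 0) (m + 1) = 0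
      rw [coeffL_add, coeffL_smul, coeffL_negA, coeffL_negA, coeffL_T]
      rcases eq_or_lt_of_le (show -1 ≤ m by omega) with hme | hme
      · rw [if_pos (by omega), if_neg (by omega), if_pos (by omega), ← hme]
        have : (kl : ℂ) ≠ 0 := by exact_mod_cast hkl
        rw [zero_add, mul_one, hc, mul_div_cancel₀ _ this, sub_self]
      · rw [if_neg (by omega), if_neg (by omega), if_neg (by omega)]
        ring
  · rw [mem_B0_iff]
    refine ⟨fun n hn => ?_, fun n hn => coeffL_sub_negA z.2 n hn⟩
    show coeffL (z.1 - (negA z.1 + c • T 0)) n = 0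
    rw [coeffL_sub, coeffL_add, coeffL_smul, coeffL_negA, coeffL_T,
      if_pos hn, if_neg (by omega), mul_zero, add_zero, sub_self]

lemma backward3 {K kl : ℤ} (hK : 3 ≤ K) (z : V)
    (h1 : ∀ n : ℤ, 3 - K ≤ n → n ≤ -1 → coeffL z.1 n = 0)
    (h2 : ∀ m : ℤ, 2 - K ≤ m → m ≤ -1 → coeffL z.2 m = 0)
    (h3 : coeffL z.2 (1 - K) = (kl : ℂ) * coeffL z.1 (2 - K)) : z ∈ B K kl := by
  refine decomp K kl z (negA z.1, negA z.2) ?_ ?_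
  · rw [mem_B1_iff]
    constructor
    · intro n hn
      rw [coeffL_negA]
      split_ifs with hneg
      · exact h1 n (by omega) (by omega)
      · rfl
    · intro m hm
      show coeffL (negA z.2) m - (kl : ℂ) * coeffL (negA z.1) (m + 1) = 0
      rw [coeffL_negA, coeffL_negA]
      rcases lt_or_ge m 0 with hm0 | hm0
      · rw [if_pos hm0]
        rcases eq_or_lt_of_le (show 1 - K ≤ m by omega) with hme | hme
        · rw [← hme, if_pos (by omega)]
          have e : 1 - K + 1 = 2 - K := by ring
          rw [e, h3, sub_self]
        · rw [h2 m (by omega) (by omega)]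
          split_ifs with hp
          · rw [h1 (m + 1) (by omega) (by omega), mul_zero, sub_zero]
          · rw [mul_zero, sub_zero]
      · rw [if_neg (by omega), if_neg (by omega), mul_zero, sub_zero]
  · rw [mem_B0_iff]
    exact ⟨fun n hn => coeffL_sub_negA z.1 n hn, fun n hn => coeffL_sub_negA z.2 n hn⟩

theorem stmt_6' (kl K : ℤ) (hK4 : K ≠ 4)
    (h : ¬(K = 2 ∧ kl = 0)) :
    ∀ z : V, Eop z ∈ B K kl → Fop K kl z ∈ B K kl → z ∈ B K kl := by
  intro z hE hF
  rcases lt_or_ge K 3 with hKlt | hK3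
  · rcases lt_or_ge K 2 with hK1 | hK2
    · exact backward_le1 (by omega) z
    · have hK2' : K = 2 := by omega
      have hkl : kl ≠ 0 := fun hkl0 => h ⟨hK2', hkl0⟩
      exact backward2 hK2' hkl z
  · obtain ⟨hEa, hEb, hEc⟩ := forward hE
    obtain ⟨hFa, hFb, hFc⟩ := forward hF
    have ha : ∀ n : ℤ, 3 - K ≤ n → n ≤ -1 → coeffL z.1 n = 0 := by
      intro n hn1 hn2
      rcases le_or_gt (4 - K) n with hcase | hcase
      · have hh := hEa (n - 1) (by omega) (by omega)
        rw [coeffL_Eop1, (show n - 1 + 1 = n by ring)] at hh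
        exact (mul_eq_zero.mp hh).resolve_left
          (by exact_mod_cast (show n ≠ 0 by omega))
      · have hh := hFa (n + 1) (by omega) (by omega)
        rw [coeffL_Fop1, (show n + 1 - 1 = n by ring)] at hh
        exact (mul_eq_zero.mp hh).resolve_left
          (by exact_mod_cast (show 3 - K - (n + 1) ≠ 0 by omega))
    have hb : ∀ m : ℤ, 2 - K ≤ m → m ≤ -1 → coeffL z.2 m = 0 := by
      intro m hm1 hm2
      rcases le_or_gt (3 - K) m with hcase | hcase
      · have hh := hEb (m - 1) (by omega) (by omega)
        rw [coeffL_Eop2, (show m - 1 + 1 = m by ring)] at hh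
        exact (mul_eq_zero.mp hh).resolve_left
          (by exact_mod_cast (show m ≠ 0 by omega))
      · have hm' : m = 2 - K := by omega
        have hh := hEc (1 - K) (by omega) (by omega)
        rw [(show (1 : ℤ) - K + 1 = 2 - K by ring)] at hh
        rw [coeffL_Eop1 z (2 - K), coeffL_Eop2 z (1 - K)] at hh
        rw [(show (1 : ℤ) - K + 1 = 2 - K by ring),
          (show (2 : ℤ) - K + 1 = 3 - K by ring)] at hh
        have hrhs : (kl : ℂ) * (((3 - K : ℤ) : ℂ) * coeffL z.1 (3 - K)) = 0 := by
          rcases eq_or_lt_of_le hK3 with h3 | h5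
        -- K = 3 or K ≥ 5 (since K ≠ 4)
          · have hz0 : ((3 - K : ℤ) : ℂ) = 0 := by
              exact_mod_cast (show (3 - K : ℤ) = 0 by omega)
            rw [hz0]; ring
          · rw [ha (3 - K) le_rfl (by omega), mul_zero, mul_zero]
        rw [hrhs] at hh
        have hres := (mul_eq_zero.mp hh).resolve_left
          (show ((2 - K : ℤ) : ℂ) ≠ 0 by
            exact_mod_cast (show (2 : ℤ) - K ≠ 0 by omega))
        rwa [hm']
    have h3' : coeffL z.2 (1 - K) = (kl : ℂ) * coeffL z.1 (2 - K) := by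
      have hh := hFb (2 - K) (by omega) (by omega)
      rw [coeffL_Fop2, (show (2 : ℤ) - K - 1 = 1 - K by ring),
        (show (K + (2 - K) - 1 : ℤ) = 1 by ring)] at hh
      push_cast at hh
      rw [one_mul] at hh
      exact (sub_eq_zero.mp hh).symm
    exact backward3 hK3 z ha hb h3'

/-- If `K = kᵢ + kⱼ ≠ 4` and not both `K = 2` and `kl = 0`, then the
𝔰-invariant part of `H¹(ℂℙ¹, T₂^{ij})` is zero. -/
theorem stmt_6 (ki kj kl K : ℤ) (hK : K = ki + kj) (hK4 : K ≠ 4)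
    (h : ¬(K = 2 ∧ kl = 0)) :
    ∀ z : V, Eop z ∈ B K kl → Fop K kl z ∈ B K kl → z ∈ B K kl := by
  intro z hE hF
  exact stmt_6' kl K hK4 h z hE hF
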